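/- Let z = ((s_k, v_k))_{k≥1} ∈ Z↓ and θ ∈ ℝ. For a marked partition x and n ≥ 1, let S_θ^{(n)}(x) := Σ_B (mark of B)^θ ∈ [0,∞], the sum over the blocks B of the restriction of x to {1,…,n} (with the convention 0^θ = 0). Then ∫ S_θ^{(n)}(x) ρ_z(dx) = Σ_{i≥1} (1 − (1 − s_i)^n) · v_i^θ ∈ [0,∞]; in particular, n ↦ ∫ S_θ^{(n)} dρ_z is nondecreasing and converges to Σ_{i≥1} v_i^θ as n → ∞. -/

import Mathlib

open MeasureTheory ProbabilityTheory Filter Topology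

/-- A marked partition of `ℕ`: an equivalence relation together with a mark function
that is constant on each block. -/
structure MarkedPartition where
  rel : ℕ → ℕ → Prop
  refl : ∀ i, rel i i
  symm : ∀ {i j}, rel i j → rel j i
  trans : ∀ {i j k}, rel i j → rel j k → rel i k
  v : ℕ → ℝ
  consistent : ∀ {i j}, rel i j → v i = v j

namespace MarkedPartition

/-- The σ-algebra on marked partitions, generated by the maps `x ↦ x.rel i j` and `x ↦ x.v i`. -/
instance : MeasurableSpace MarkedPartition :=
  (⨆ (i : ℕ) (j : ℕ), MeasurableSpace.comap (fun x : MarkedPartition => x.rel i j) ⊤) ⊔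
    (⨆ i : ℕ, MeasurableSpace.comap (fun x : MarkedPartition => x.v i) (inferInstance))

/-- Action of a permutation of `ℕ` on marked partitions. -/
def perm (σ : Equiv.Perm ℕ) (x : MarkedPartition) : MarkedPartition where
  rel i j := x.rel (σ i) (σ j)
  refl i := x.refl _
  symm h := x.symm h
  trans h h' := x.trans h h'
  v i := x.v (σ i)
  consistent h := x.consistent h

/-- The block containing `i`. -/
def block (x : MarkedPartition) (i : ℕ) : Set ℕ := {j | x.rel i j}

/-- Non-degenerate: every finite block has mark `0`. -/
def NonDegenerate (x : MarkedPartition) : Prop := ∀ i, (x.block i).Finite → x.v i = 0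

/-- Least element of the block containing `i`. -/
noncomputable def leastOf (x : MarkedPartition) (i : ℕ) : ℕ := sInf (x.block i)

open Classical in
/-- The label of the block of `x` containing `i`, blocks being labelled in increasing
order of their least elements (labels start at `1`). -/
noncomputable def label (x : MarkedPartition) (i : ℕ) : ℕ :=
  ((Finset.range (x.leastOf i + 1)).filter (fun m => x.leastOf m = m)).card

end MarkedPartition

/-- A permutation is finitely supported. -/
def FinSupp (σ : Equiv.Perm ℕ) : Prop := {n | σ n ≠ n}.Finite

/-- Lexicographic order on pairs `(s, v)`. -/
def lexLe (a b : ℝ × ℝ) : Prop := a.1 < b.1 ∨ (a.1 = b.1 ∧ a.2 ≤ b.2)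

/-- Membership in the space `Z↓`. -/
def MemZdown (z : ℕ → ℝ × ℝ) : Prop :=
  (∀ k, (z k).1 ∈ Set.Icc (0:ℝ) 1 ∧ 0 ≤ (z k).2) ∧
  (∀ k, lexLe (z (k + 1)) (z k)) ∧
  (∀ n, ∑ k ∈ Finset.range n, (z k).1 ≤ 1) ∧
  (∀ k, (z k).1 = 0 → (z k).2 = 0)

/-- `t_n = s_1 + … + s_n`. -/
def cumSum (z : ℕ → ℝ × ℝ) (n : ℕ) : ℝ := ∑ k ∈ Finset.range n, (z k).1

open Classical in
/-- Index of the paintbox interval containing `u`, if any. -/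
noncomputable def pbIdx (z : ℕ → ℝ × ℝ) (u : ℝ) : Option ℕ :=
  if h : ∃ n, cumSum z n ≤ u ∧ u < cumSum z (n + 1) then some (Nat.find h) else none

/-- The paintbox marked partition built from `z` and the sequence `u` of uniform samples. -/
noncomputable def paintbox (z : ℕ → ℝ × ℝ) (u : ℕ → ℝ) : MarkedPartition where
  rel i j := i = j ∨ ((pbIdx z (u i)).isSome ∧ pbIdx z (u i) = pbIdx z (u j))
  refl _ := Or.inl rfl
  symm h := by
    rcases h with h | ⟨hs, he⟩
    · exact Or.inl h.symm
    · exact Or.inr ⟨he ▸ hs, he.symm⟩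
  trans h h' := by
    rcases h with rfl | ⟨hs, he⟩
    · exact h'
    · rcases h' with rfl | ⟨hs', he'⟩
      · exact Or.inr ⟨hs, he⟩
      · exact Or.inr ⟨hs, he.trans he'⟩
  v i := (pbIdx z (u i)).elim 0 (fun n => (z n).2)
  consistent h := by
    rcases h with rfl | ⟨hs, he⟩
    · rfl
    · rw [he]

/-- The uniform distribution on `[0,1]`. -/
noncomputable def uniform01 : Measure ℝ := volume.restrict (Set.Icc 0 1)

/-- `U` is an i.i.d. sequence of uniform random variables on `[0,1]` under `μ`. -/
def IsIIDUniform {Θ : Type*} [MeasurableSpace Θ] (μ : Measure Θ) (U : ℕ → Θ → ℝ) : Prop :=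
  (∀ n, Measurable (U n)) ∧ iIndepFun U μ ∧
    ∀ n, μ.map (U n) = uniform01

/-- The paintbox measure `ρ_z`, the law of the paintbox construction driven by the
i.i.d. uniform sequence `U` defined on `(Θ, μ)`. -/
noncomputable def paintboxLaw {Θ : Type*} [MeasurableSpace Θ] (μ : Measure Θ)
    (U : ℕ → Θ → ℝ) (z : ℕ → ℝ × ℝ) : Measure MarkedPartition :=
  μ.map (fun θ => paintbox z (fun n => U n θ))

open Classical in
/-- `#(B ∩ [n]) / n`. -/
noncomputable def freqAvg (B : Set ℕ) (n : ℕ) : ℝ :=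
  (((Finset.range n).filter (fun j => j ∈ B)).card : ℝ) / n

/-- `B` has an asymptotic frequency. -/
def HasFreq (B : Set ℕ) : Prop := ∃ l : ℝ, Tendsto (freqAvg B) atTop (𝓝 l)

/-- The asymptotic frequency of `B` (junk value if the limit does not exist). -/
noncomputable def freq (B : Set ℕ) : ℝ := limUnder atTop (freqAvg B)

/-- `x` has asymptotic frequencies. -/
def MarkedPartition.HasFreqs (x : MarkedPartition) : Prop := ∀ i, HasFreq (x.block i)

/-- The set of least representatives of infinite blocks of `x` with positive asymptotic
frequency. -/
def MarkedPartition.posReps (x : MarkedPartition) : Set ℕ :=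
  {r | x.leastOf r = r ∧ (x.block r).Infinite ∧ 0 < freq (x.block r)}

/-- `g` is the `⪯`-nonincreasing enumeration `|x|↓` of the pairs
(asymptotic frequency, mark) over the infinite blocks of `x` with positive frequency,
completed by `(0,0)` terms. -/
def IsRankedFreqs (x : MarkedPartition) (g : ℕ → ℝ × ℝ) : Prop :=
  (∀ k, lexLe (g (k + 1)) (g k)) ∧
  ∃ e : ℕ → ℕ, Set.BijOn e {k | g k ≠ (0, 0)} x.posReps ∧
    ∀ k, g k ≠ (0, 0) → g k = (freq (x.block (e k)), x.v (e k))

open scoped ENNReal in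
/-- `v^θ` with the convention `0^θ = 0`, as an extended nonnegative real. -/
noncomputable def powE (v θ : ℝ) : ℝ≥0∞ := if v = 0 then 0 else ENNReal.ofReal (v ^ θ)

open Classical ENNReal in
/-- `S_θ^{(n)}(x) = Σ_B (mark of B)^θ`, the sum over the blocks `B` of the restriction
of `x` to `{1,…,n}` (blocks are recorded through their least element). -/
noncomputable def Sthetan (θ : ℝ) (n : ℕ) (x : MarkedPartition) : ℝ≥0∞ :=
  ∑ i ∈ Finset.range n, if ∀ j < i, ¬ x.rel i j then powE (x.v i) θ else 0

section AuxPaintbox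

open scoped ENNReal

variable {z : ℕ → ℝ × ℝ}

lemma aux_cumSum_mono (hz : MemZdown z) : Monotone (cumSum z) := fun _ _ hab =>
  Finset.sum_le_sum_of_subset_of_nonneg (Finset.range_subset_range.2 hab)
    (fun k _ _ => (hz.1 k).1.1)

lemma aux_pbIdx_eq_some_iff (hz : MemZdown z) (u : ℝ) (k : ℕ) :
    pbIdx z u = some k ↔ u ∈ Set.Ico (cumSum z k) (cumSum z (k + 1)) := by
  classical
  unfold pbIdx
  split_ifs with h
  · constructor
    · intro hk
      have hfind : Nat.find h = k := Option.some_injective _ hk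
      have hspec := Nat.find_spec h
      rw [hfind] at hspec
      exact hspec
    · rintro ⟨h1, h2⟩
      have hle : Nat.find h ≤ k := Nat.find_le ⟨h1, h2⟩
      rcases eq_or_lt_of_le hle with heq | hlt
      · rw [heq]
      · exfalso
        have hspec := Nat.find_spec h
        have hm : cumSum z (Nat.find h + 1) ≤ cumSum z k :=
          aux_cumSum_mono hz (Nat.succ_le_of_lt hlt)
        linarith [hspec.2]
  · exact iff_of_false (by simp) (fun hmem => h ⟨k, hmem.1, hmem.2⟩)

lemma aux_measurableSet_pbIdx_fiber (hz : MemZdown z) (k : ℕ) :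
    MeasurableSet {u : ℝ | pbIdx z u = some k} := by
  have : {u : ℝ | pbIdx z u = some k} = Set.Ico (cumSum z k) (cumSum z (k + 1)) :=
    Set.ext fun u => aux_pbIdx_eq_some_iff hz u k
  rw [this]
  exact measurableSet_Ico

/-- The key combinatorial identity for the restricted paintbox. -/
lemma aux_key (hz : MemZdown z) (θ : ℝ) (u : ℕ → ℝ) (n : ℕ) :
    Sthetan θ n (paintbox z u) =
      ∑' k : ℕ, if ∃ i < n, pbIdx z (u i) = some k then powE (z k).2 θ else 0 := by
  classical
  set f : ℕ → Option ℕ := fun i => pbIdx z (u i) with hf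
  have hv : ∀ i, (paintbox z u).v i = (f i).elim 0 (fun k => (z k).2) := fun i => rfl
  set I : Finset ℕ :=
    (Finset.range n).filter (fun i => (f i).isSome ∧ ∀ j < i, f j ≠ f i) with hI
  have stepA : Sthetan θ n (paintbox z u) = ∑ i ∈ I, powE ((paintbox z u).v i) θ := by
    rw [hI, Finset.sum_filter]
    unfold Sthetan
    refine Finset.sum_congr rfl fun i _ => ?_
    by_cases hs : (f i).isSome
    · have hiff : (∀ j < i, ¬ (paintbox z u).rel i j) ↔
          ((f i).isSome ∧ ∀ j < i, f j ≠ f i) := by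
        constructor
        · intro h
          refine ⟨hs, fun j hj hje => ?_⟩
          exact h j hj (Or.inr ⟨hs, hje.symm⟩)
        · rintro ⟨-, h2⟩ j hj hrel
          rcases hrel with heq | ⟨-, heq⟩
          · exact absurd heq.symm (Nat.ne_of_lt hj)
          · exact h2 j hj heq.symm
      exact if_congr hiff rfl rfl
    · have hv0 : (paintbox z u).v i = 0 := by
        rw [hv, Option.not_isSome_iff_eq_none.1 hs]; rfl
      rw [hv0]
      simp [powE, hs]
  have hkeyF : ∀ i ∈ I, f i = some ((f i).getD 0) := by
    intro i hi
    rcases Option.isSome_iff_exists.1 (Finset.mem_filter.1 hi).2.1 with ⟨k, hk⟩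
    rw [hk]; rfl
  have hinj : ∀ a ∈ I, ∀ b ∈ I, (f a).getD 0 = (f b).getD 0 → a = b := by
    intro a ha b hb hab
    have hfe : f a = f b := by rw [hkeyF a ha, hkeyF b hb, hab]
    rcases lt_trichotomy a b with h | h | h
    · exact absurd hfe ((Finset.mem_filter.1 hb).2.2 a h)
    · exact h
    · exact absurd hfe.symm ((Finset.mem_filter.1 ha).2.2 b h)
  have hsupp : ∀ k ∉ I.image (fun i => (f i).getD 0),
      (if ∃ i < n, f i = some k then powE (z k).2 θ else 0) = 0 := by
    intro k hk
    rw [if_neg]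
    rintro ⟨i, hin, hik⟩
    have hex : ∃ i, i < n ∧ f i = some k := ⟨i, hin, hik⟩
    have hspec := Nat.find_spec hex
    apply hk
    refine Finset.mem_image.2 ⟨Nat.find hex, ?_, by rw [hspec.2]; rfl⟩
    refine Finset.mem_filter.2 ⟨Finset.mem_range.2 hspec.1, by rw [hspec.2]; rfl, ?_⟩
    intro j hj hje
    exact Nat.find_min hex hj ⟨hj.trans hspec.1, by rw [hje, hspec.2]⟩
  set F : ℕ → ℝ≥0∞ := fun k => if ∃ i < n, f i = some k then powE (z k).2 θ else 0
    with hF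
  calc Sthetan θ n (paintbox z u) = ∑ i ∈ I, powE ((paintbox z u).v i) θ := stepA
    _ = ∑ i ∈ I, F ((f i).getD 0) := by
        refine Finset.sum_congr rfl fun i hi => ?_
        have hmem := Finset.mem_filter.1 hi
        simp only [hF]
        rw [if_pos ⟨i, Finset.mem_range.1 hmem.1, hkeyF i hi⟩, hv, hkeyF i hi]
        rfl
    _ = ∑ k ∈ I.image (fun i => (f i).getD 0), F k := (Finset.sum_image hinj).symm
    _ = ∑' k : ℕ, F k := (tsum_eq_sum hsupp).symm

lemma aux_uniform01_Ico {a b : ℝ} (h0 : 0 ≤ a) (hab : a ≤ b) (hb1 : b ≤ 1) :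
    uniform01 (Set.Ico a b) = ENNReal.ofReal (b - a) := by
  have hsub : Set.Ico a b ⊆ Set.Icc 0 1 :=
    Set.Ico_subset_Icc_self.trans (Set.Icc_subset_Icc h0 hb1)
  rw [uniform01, Measure.restrict_apply measurableSet_Ico,
    Set.inter_eq_self_of_subset_left hsub]
  exact Real.volume_Ico

lemma aux_prob {Θ : Type} [MeasurableSpace Θ] (Q : Measure Θ) [IsProbabilityMeasure Q]
    {U : ℕ → Θ → ℝ} (hU : IsIIDUniform Q U) {S : Set ℝ} (hS : MeasurableSet S) (n : ℕ) :
    Q {θ' | ∃ i < n, U i θ' ∈ S} = 1 - (1 - uniform01 S) ^ n := by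
  have hQS : ∀ i, Q ((U i) ⁻¹' Sᶜ) = 1 - uniform01 S := by
    intro i
    have h1 : Q ((U i) ⁻¹' S) = uniform01 S := by
      rw [← hU.2.2 i, Measure.map_apply (hU.1 i) hS]
    have h2 := measure_compl (hU.1 i hS) (measure_ne_top Q _)
    rw [measure_univ, h1] at h2
    rw [Set.preimage_compl, h2]
  have hE : MeasurableSet {θ' | ∃ i < n, U i θ' ∈ S} := by
    have : {θ' | ∃ i < n, U i θ' ∈ S} = ⋃ i, ⋃ (_ : i < n), (U i) ⁻¹' S := by
      ext θ'; simp
    rw [this]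
    exact MeasurableSet.iUnion fun i => MeasurableSet.iUnion fun _ => hU.1 i hS
  have hcompl : {θ' | ∃ i < n, U i θ' ∈ S}ᶜ = ⋂ i ∈ Finset.range n, (U i) ⁻¹' Sᶜ := by
    ext θ'; simp
  have hEc : Q ({θ' | ∃ i < n, U i θ' ∈ S}ᶜ) = (1 - uniform01 S) ^ n := by
    rw [hcompl, hU.2.1.meas_biInter (fun i _ => ⟨Sᶜ, hS.compl, rfl⟩)]
    rw [Finset.prod_congr rfl (fun i _ => hQS i), Finset.prod_const, Finset.card_range]
  have h := measure_compl hE (measure_ne_top Q _)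
  rw [measure_univ, hEc] at h
  rw [h]
  exact (ENNReal.sub_sub_cancel ENNReal.one_ne_top prob_le_one).symm

lemma aux_measurable_rel (i j : ℕ) :
    Measurable fun x : MarkedPartition => x.rel i j :=
  measurable_iff_comap_le.2 <|
    le_trans
      (le_iSup₂ (f := fun i j =>
        MeasurableSpace.comap (fun x : MarkedPartition => x.rel i j)
          (⊤ : MeasurableSpace Prop)) i j)
      le_sup_left

lemma aux_measurable_v (i : ℕ) :
    Measurable fun x : MarkedPartition => x.v i :=
  measurable_iff_comap_le.2 <|
    le_trans
      (le_iSup (fun i =>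
        MeasurableSpace.comap (fun x : MarkedPartition => x.v i) inferInstance) i)
      le_sup_right

lemma aux_measurable_powE (θ : ℝ) : Measurable fun v : ℝ => powE v θ := by
  unfold powE
  exact Measurable.ite (measurableSet_eq)
    measurable_const (ENNReal.measurable_ofReal.comp (measurable_id.pow measurable_const))

lemma aux_measurable_Sthetan (θ : ℝ) (n : ℕ) : Measurable (Sthetan θ n) := by
  unfold Sthetan
  refine Finset.measurable_sum _ fun i _ => ?_
  refine Measurable.ite ?_ ((aux_measurable_powE θ).comp (aux_measurable_v i))
    measurable_const
  have : {x : MarkedPartition | ∀ j < i, ¬ x.rel i j} =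
      ⋂ j, ⋂ (_ : j < i), {x : MarkedPartition | x.rel i j}ᶜ := by
    ext x; simp
  rw [this]
  exact MeasurableSet.iInter fun j => MeasurableSet.iInter fun _ =>
    (measurableSet_setOf.2 (aux_measurable_rel i j)).compl

lemma aux_measurable_pbV (hz : MemZdown z) :
    Measurable fun u : ℝ => (pbIdx z u).elim (0 : ℝ) (fun k => (z k).2) := by
  classical
  have hT : MeasurableSet {u : ℝ | (pbIdx z u).isSome} := by
    have : {u : ℝ | (pbIdx z u).isSome} = ⋃ k, {u : ℝ | pbIdx z u = some k} := by
      ext u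
      simp only [Set.mem_setOf_eq, Set.mem_iUnion, Option.isSome_iff_exists]
    rw [this]
    exact MeasurableSet.iUnion fun k => aux_measurableSet_pbIdx_fiber hz k
  have hN : Measurable fun u : ℝ => (pbIdx z u).getD 0 := by
    apply measurable_to_countable'
    intro k
    rcases Nat.eq_zero_or_pos k with hk0 | hkpos
    · have : (fun u : ℝ => (pbIdx z u).getD 0) ⁻¹' {k} =
          {u : ℝ | pbIdx z u = some k} ∪ {u : ℝ | (pbIdx z u).isSome}ᶜ := by
        subst hk0
        ext u
        rcases ho : pbIdx z u with _ | m <;>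
          simp [Set.mem_preimage, ho, Option.getD]
      rw [this]
      exact (aux_measurableSet_pbIdx_fiber hz k).union hT.compl
    · have : (fun u : ℝ => (pbIdx z u).getD 0) ⁻¹' {k} =
          {u : ℝ | pbIdx z u = some k} := by
        ext u
        rcases ho : pbIdx z u with _ | m <;>
          simp [Set.mem_preimage, ho, Option.getD, (Nat.pos_iff_ne_zero.1 hkpos).symm]
      rw [this]
      exact aux_measurableSet_pbIdx_fiber hz k
  have heq : (fun u : ℝ => (pbIdx z u).elim (0 : ℝ) (fun k => (z k).2)) =
      Set.piecewise {u : ℝ | (pbIdx z u).isSome}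
        (fun u => (z ((pbIdx z u).getD 0)).2) (fun _ => 0) := by
    ext u
    rcases ho : pbIdx z u with _ | k <;>
      simp [Set.piecewise, ho]
  rw [heq]
  exact Measurable.piecewise hT
    ((measurable_of_countable fun k : ℕ => (z k).2).comp hN) measurable_const

lemma aux_measurable_paintbox {Θ : Type} [MeasurableSpace Θ] (hz : MemZdown z)
    {U : ℕ → Θ → ℝ} (hU : ∀ m, Measurable (U m)) :
    Measurable fun θ' => paintbox z (fun m => U m θ') := by
  rw [measurable_iff_comap_le]
  show MeasurableSpace.comap _
      ((⨆ (i : ℕ) (j : ℕ),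
        MeasurableSpace.comap (fun x : MarkedPartition => x.rel i j) ⊤) ⊔
      (⨆ i : ℕ, MeasurableSpace.comap (fun x : MarkedPartition => x.v i) inferInstance)) ≤ _
  rw [MeasurableSpace.comap_sup]
  refine sup_le ?_ ?_
  · rw [MeasurableSpace.comap_iSup]
    refine iSup_le fun i => ?_
    rw [MeasurableSpace.comap_iSup]
    refine iSup_le fun j => ?_
    rw [MeasurableSpace.comap_comp]
    refine measurable_iff_comap_le.1 ?_
    refine measurableSet_setOf.1 ?_
    show MeasurableSet {θ' | (paintbox z (fun m => U m θ')).rel i j}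
    by_cases hij : i = j
    · have : {θ' : Θ | (paintbox z (fun m => U m θ')).rel i j} = Set.univ := by
        ext θ'
        simp only [Set.mem_setOf_eq, Set.mem_univ, iff_true]
        exact Or.inl hij
      rw [this]; exact MeasurableSet.univ
    · have : {θ' : Θ | (paintbox z (fun m => U m θ')).rel i j} =
          ⋃ k, ((U i) ⁻¹' Set.Ico (cumSum z k) (cumSum z (k + 1)) ∩
            (U j) ⁻¹' Set.Ico (cumSum z k) (cumSum z (k + 1))) := by
        ext θ'
        simp only [Set.mem_setOf_eq, Set.mem_iUnion, Set.mem_inter_iff, Set.mem_preimage]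
        constructor
        · rintro (heq | ⟨hs, he⟩)
          · exact absurd heq hij
          · rcases Option.isSome_iff_exists.1 hs with ⟨k, hk⟩
            exact ⟨k, (aux_pbIdx_eq_some_iff hz _ k).1 hk,
              (aux_pbIdx_eq_some_iff hz _ k).1 (he ▸ hk)⟩
        · rintro ⟨k, hki, hkj⟩
          refine Or.inr ⟨?_, ?_⟩
          · rw [(aux_pbIdx_eq_some_iff hz _ k).2 hki]; rfl
          · rw [(aux_pbIdx_eq_some_iff hz _ k).2 hki,
              (aux_pbIdx_eq_some_iff hz _ k).2 hkj]
      rw [this]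
      exact MeasurableSet.iUnion fun k =>
        (hU i measurableSet_Ico).inter (hU j measurableSet_Ico)
  · rw [MeasurableSpace.comap_iSup]
    refine iSup_le fun i => ?_
    rw [MeasurableSpace.comap_comp]
    refine measurable_iff_comap_le.1 ?_
    show Measurable fun θ' => (paintbox z (fun m => U m θ')).v i
    exact (aux_measurable_pbV hz).comp (hU i)

lemma aux_formula {Θ : Type} [MeasurableSpace Θ] (Q : Measure Θ) [IsProbabilityMeasure Q]
    {U : ℕ → Θ → ℝ} (hU : IsIIDUniform Q U) (hz : MemZdown z) (θ : ℝ) (n : ℕ) :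
    ∫⁻ x, Sthetan θ n x ∂(paintboxLaw Q U z) =
      ∑' k : ℕ, ENNReal.ofReal (1 - (1 - (z k).1) ^ n) * powE (z k).2 θ := by
  classical
  have hE : ∀ k : ℕ, MeasurableSet
      {θ' : Θ | ∃ i < n, U i θ' ∈ Set.Ico (cumSum z k) (cumSum z (k + 1))} := by
    intro k
    have : {θ' : Θ | ∃ i < n, U i θ' ∈ Set.Ico (cumSum z k) (cumSum z (k + 1))} =
        ⋃ i, ⋃ (_ : i < n), (U i) ⁻¹' Set.Ico (cumSum z k) (cumSum z (k + 1)) := by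
      ext θ'
      simp only [Set.mem_setOf_eq, Set.mem_iUnion, Set.mem_preimage, Set.mem_Ico]
      tauto
    rw [this]
    exact MeasurableSet.iUnion fun i => MeasurableSet.iUnion fun _ =>
      hU.1 i measurableSet_Ico
  rw [paintboxLaw, lintegral_map (aux_measurable_Sthetan θ n)
    (aux_measurable_paintbox hz hU.1)]
  have hpt : ∀ θ' : Θ, Sthetan θ n (paintbox z fun m => U m θ') =
      ∑' k : ℕ, Set.indicator
        {θ'' : Θ | ∃ i < n, U i θ'' ∈ Set.Ico (cumSum z k) (cumSum z (k + 1))}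
        (fun _ => powE (z k).2 θ) θ' := by
    intro θ'
    rw [aux_key hz θ _ n]
    refine tsum_congr fun k => ?_
    rw [Set.indicator_apply]
    refine if_congr ?_ rfl rfl
    constructor
    · rintro ⟨i, hin, hik⟩
      exact ⟨i, hin, (aux_pbIdx_eq_some_iff hz _ k).1 hik⟩
    · rintro ⟨i, hin, hik⟩
      exact ⟨i, hin, (aux_pbIdx_eq_some_iff hz _ k).2 hik⟩
  rw [lintegral_congr hpt]
  rw [lintegral_tsum (fun k => (measurable_const.indicator (hE k)).aemeasurable)]
  refine tsum_congr fun k => ?_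
  rw [lintegral_indicator (hE k), setLIntegral_const]
  have hs0 : (0 : ℝ) ≤ (z k).1 := (hz.1 k).1.1
  have hs1 : (z k).1 ≤ 1 := (hz.1 k).1.2
  have hcs : cumSum z (k + 1) - cumSum z k = (z k).1 := by
    rw [cumSum, cumSum, Finset.sum_range_succ]; ring
  have hQ : Q {θ'' : Θ | ∃ i < n, U i θ'' ∈ Set.Ico (cumSum z k) (cumSum z (k + 1))} =
      ENNReal.ofReal (1 - (1 - (z k).1) ^ n) := by
    have hc0 : (0 : ℝ) ≤ cumSum z k := Finset.sum_nonneg fun i _ => (hz.1 i).1.1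
    have hc1 : cumSum z (k + 1) ≤ 1 := hz.2.2.1 (k + 1)
    have hcm : cumSum z k ≤ cumSum z (k + 1) := aux_cumSum_mono hz (Nat.le_succ k)
    rw [aux_prob Q hU measurableSet_Ico n, aux_uniform01_Ico hc0 hcm hc1, hcs]
    rw [show (1 : ℝ≥0∞) - ENNReal.ofReal (z k).1 = ENNReal.ofReal (1 - (z k).1) by
      rw [ENNReal.ofReal_sub 1 hs0, ENNReal.ofReal_one]]
    rw [← ENNReal.ofReal_pow (by linarith) n]
    rw [ENNReal.ofReal_sub 1 (pow_nonneg (by linarith) n), ENNReal.ofReal_one]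
  rw [hQ, mul_comm]

end AuxPaintbox

/-- **Moments of restricted paintboxes.** For `z ∈ Z↓`, `θ ∈ ℝ` and `n ≥ 1`,
`∫ S_θ^{(n)} dρ_z = Σ_i (1 − (1 − s_i)^n)·v_i^θ`; in particular `n ↦ ∫ S_θ^{(n)} dρ_z`
is nondecreasing and converges to `Σ_i v_i^θ`. -/
theorem paintboxLaw_Sthetan
    {Θ : Type} [MeasurableSpace Θ] (Q : Measure Θ) [IsProbabilityMeasure Q]
    (U : ℕ → Θ → ℝ) (hU : IsIIDUniform Q U)
    (z : ℕ → ℝ × ℝ) (hz : MemZdown z) (θ : ℝ) :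
    (∀ n, 1 ≤ n →
      ∫⁻ x, Sthetan θ n x ∂(paintboxLaw Q U z) =
        ∑' i : ℕ, ENNReal.ofReal (1 - (1 - (z i).1) ^ n) * powE (z i).2 θ) ∧
    Monotone (fun n => ∫⁻ x, Sthetan θ n x ∂(paintboxLaw Q U z)) ∧
    Tendsto (fun n => ∫⁻ x, Sthetan θ n x ∂(paintboxLaw Q U z)) atTop
      (𝓝 (∑' i : ℕ, powE (z i).2 θ)) := by
  classical
  have hform := fun n => aux_formula Q hU hz θ n
  have hmono : Monotone (fun n => ∫⁻ x, Sthetan θ n x ∂(paintboxLaw Q U z)) := by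
    intro m n hmn
    refine lintegral_mono fun x => ?_
    unfold Sthetan
    exact Finset.sum_le_sum_of_subset (Finset.range_subset_range.2 hmn)
  refine ⟨fun n _ => hform n, hmono, ?_⟩
  have hamono : Monotone (fun n => fun k : ℕ =>
      ENNReal.ofReal (1 - (1 - (z k).1) ^ n) * powE (z k).2 θ) := by
    intro m n hmn k
    refine mul_le_mul_left (ENNReal.ofReal_le_ofReal ?_) _
    have hs0 : (0 : ℝ) ≤ (z k).1 := (hz.1 k).1.1
    have hs1 : (z k).1 ≤ 1 := (hz.1 k).1.2
    have := pow_le_pow_of_le_one (by linarith : (0:ℝ) ≤ 1 - (z k).1)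
      (by linarith : (1:ℝ) - (z k).1 ≤ 1) hmn
    linarith
  have hperk : ∀ k : ℕ,
      (⨆ n : ℕ, ENNReal.ofReal (1 - (1 - (z k).1) ^ n) * powE (z k).2 θ) =
        powE (z k).2 θ := by
    intro k
    have hs0 : (0 : ℝ) ≤ (z k).1 := (hz.1 k).1.1
    have hs1 : (z k).1 ≤ 1 := (hz.1 k).1.2
    rcases eq_or_lt_of_le hs0 with hs | hs
    · have hv : (z k).2 = 0 := hz.2.2.2 k hs.symm
      simp [hv, powE]
    · have htd : Tendsto (fun n : ℕ =>
          ENNReal.ofReal (1 - (1 - (z k).1) ^ n) * powE (z k).2 θ) atTop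
          (𝓝 (1 * powE (z k).2 θ)) := by
        refine ENNReal.Tendsto.mul_const ?_ (Or.inl one_ne_zero)
        have h0 : Tendsto (fun n : ℕ => (1 - (z k).1) ^ n) atTop (𝓝 0) :=
          tendsto_pow_atTop_nhds_zero_of_lt_one (by linarith) (by linarith)
        have h1 : Tendsto (fun n : ℕ => 1 - (1 - (z k).1) ^ n) atTop (𝓝 1) := by
          have := (tendsto_const_nhds (x := (1:ℝ)) (f := atTop)).sub h0
          simpa using this
        have := (ENNReal.continuous_ofReal.tendsto 1).comp h1
        simpa [ENNReal.ofReal_one, Function.comp_def] using this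
      have := tendsto_nhds_unique
        (tendsto_atTop_iSup fun m n h => hamono h k) htd
      rw [this, one_mul]
  have hsup : (⨆ n : ℕ, ∫⁻ x, Sthetan θ n x ∂(paintboxLaw Q U z)) =
      ∑' i : ℕ, powE (z i).2 θ := by
    calc (⨆ n : ℕ, ∫⁻ x, Sthetan θ n x ∂(paintboxLaw Q U z))
        = ⨆ n : ℕ, ∑' k : ℕ, ENNReal.ofReal (1 - (1 - (z k).1) ^ n) * powE (z k).2 θ :=
          iSup_congr hform
      _ = ⨆ n : ℕ, ∫⁻ k : ℕ, ENNReal.ofReal (1 - (1 - (z k).1) ^ n) * powE (z k).2 θ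
            ∂Measure.count := iSup_congr fun n => (lintegral_count _).symm
      _ = ∫⁻ k : ℕ, ⨆ n : ℕ, ENNReal.ofReal (1 - (1 - (z k).1) ^ n) * powE (z k).2 θ
            ∂Measure.count :=
          (lintegral_iSup (fun n => measurable_of_countable _) hamono).symm
      _ = ∑' k : ℕ, ⨆ n : ℕ, ENNReal.ofReal (1 - (1 - (z k).1) ^ n) * powE (z k).2 θ :=
          lintegral_count _
      _ = ∑' i : ℕ, powE (z i).2 θ := tsum_congr hperk
  have := tendsto_atTop_iSup hmono
  rwa [hsup] at this
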